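/- arXiv:2401.11733 — 7 statements merged into one kernel-verified Lean document; each statement's English description precedes it below -/
import Mathlib

section
/- For complex numbers $c$ and $q$ with $|q| < 1$, the series $1 + \sum_{k=1}^{\infty} \frac{(-1)^k q^{k(k+1)/2} c^k}{(1-q)(1-q^2)\cdots(1-q^k)}$ converges and equals the infinite product $\prod_{k=1}^{\infty} (1 - c q^k)$. -/
open Finset Filter Topology

namespace EulerQAux

noncomputable def A (q : ℂ) (k : ℕ) : ℂ := ∏ i ∈ Finset.range k, (1 - q ^ (i + 1))

noncomputable def T (q x : ℂ) (k : ℕ) : ℂ :=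
  (-1 : ℂ) ^ k * q ^ (k * (k + 1) / 2) * x ^ k / A q k

lemma tri (k : ℕ) : (k + 1) * (k + 2) / 2 = k * (k + 1) / 2 + (k + 1) := by
  obtain ⟨m, hm⟩ := Nat.even_mul_succ_self k
  have h3 : (k + 1) * (k + 2) = k * (k + 1) + 2 * (k + 1) := by ring
  rw [h3, hm]
  omega

variable {q : ℂ}

lemma q_pow_ne_one (hq : ‖q‖ < 1) (i : ℕ) : 1 - q ^ (i + 1) ≠ 0 := by
  have h1 : ‖q ^ (i + 1)‖ < 1 := by
    rw [norm_pow]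
    exact pow_lt_one₀ (norm_nonneg q) hq (by omega)
  intro h
  rw [sub_eq_zero] at h
  rw [← h] at h1
  simp at h1

lemma A_ne_zero (hq : ‖q‖ < 1) (k : ℕ) : A q k ≠ 0 :=
  Finset.prod_ne_zero_iff.2 fun i _ => q_pow_ne_one hq i

lemma A_succ (k : ℕ) : A q (k + 1) = A q k * (1 - q ^ (k + 1)) :=
  Finset.prod_range_succ _ _

lemma T_zero (x : ℂ) : T q x 0 = 1 := by simp [T, A]

lemma T_succ (hq : ‖q‖ < 1) (x : ℂ) (k : ℕ) :
    T q x (k + 1) * (1 - q ^ (k + 1)) = -x * q ^ (k + 1) * T q x k := by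
  have hA := A_ne_zero hq k
  have hA' := A_ne_zero hq (k + 1)
  have hne := q_pow_ne_one hq k
  rw [T, T, tri, A_succ]
  field_simp
  ring

lemma T_succ' (hq : ‖q‖ < 1) (x : ℂ) (k : ℕ) :
    T q x (k + 1) = -x * q ^ (k + 1) / (1 - q ^ (k + 1)) * T q x k := by
  have hne := q_pow_ne_one hq k
  field_simp
  linear_combination T_succ hq x k

lemma T_mul (q x y : ℂ) (k : ℕ) : T q (x * y) k = T q x k * y ^ k := by
  rw [T, T, mul_pow]
  ring

lemma hq' (hq : ‖q‖ < 1) : ‖q‖ < 1 := by exact hq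

lemma qpow_tendsto (hq : ‖q‖ < 1) :
    Tendsto (fun k : ℕ => q ^ (k + 1)) atTop (𝓝 0) :=
  (tendsto_pow_atTop_nhds_zero_of_norm_lt_one (hq' hq)).comp (tendsto_add_atTop_nat 1)

lemma summable_T (hq : ‖q‖ < 1) (x : ℂ) : Summable (T q x) := by
  apply summable_of_ratio_norm_eventually_le (r := 1 / 2) (by norm_num)
  have t1 := qpow_tendsto hq
  have t2 : Tendsto (fun k : ℕ => -x * q ^ (k + 1) / (1 - q ^ (k + 1))) atTop (𝓝 0) := by
    have td : Tendsto (fun k : ℕ => (1 : ℂ) - q ^ (k + 1)) atTop (𝓝 (1 - 0)) :=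
      tendsto_const_nhds.sub t1
    have := (t1.const_mul (-x)).div td (by norm_num)
    simpa [Pi.div_def] using this
  have t3 := t2.norm
  rw [norm_zero] at t3
  filter_upwards [t3.eventually_le_const (by norm_num : (0 : ℝ) < 1 / 2)] with k hk
  rw [T_succ' hq, norm_mul]
  exact mul_le_mul_of_nonneg_right hk (norm_nonneg _)

lemma feq (hq : ‖q‖ < 1) (x : ℂ) :
    ∑' k, T q x k = (1 - x * q) * ∑' k, T q (x * q) k := by
  have hs1 : Summable (T q x) := summable_T hq x
  have hs2 : Summable (fun k => T q x k * q ^ k) :=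
    (summable_T hq (x * q)).congr fun k => (T_mul q x q k)
  have h3 : Summable (fun k => T q x k * (1 - q ^ k)) :=
    (hs1.sub hs2).congr fun k => by ring
  have key : ∀ k : ℕ, T q x (k + 1) * (1 - q ^ (k + 1)) = -(x * q) * (T q x k * q ^ k) := by
    intro k
    rw [T_succ hq]
    ring
  have e1 : ∑' k, T q x k * (1 - q ^ k) = -(x * q) * ∑' k, T q x k * q ^ k := by
    rw [Summable.tsum_eq_zero_add h3]
    simp only [pow_zero, sub_self, mul_zero, zero_add]
    rw [tsum_congr key, tsum_mul_left]
  have e2 : ∑' k, T q x k * (1 - q ^ k) = (∑' k, T q x k) - ∑' k, T q x k * q ^ k := by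
    rw [← Summable.tsum_sub hs1 hs2]
    exact tsum_congr fun k => by ring
  have e3 : ∑' k, T q (x * q) k = ∑' k, T q x k * q ^ k := tsum_congr fun k => T_mul q x q k
  rw [e3]
  rw [e2] at e1
  linear_combination e1

lemma iter (hq : ‖q‖ < 1) (x : ℂ) (n : ℕ) :
    ∑' k, T q x k = (∏ i ∈ Finset.range n, (1 - x * q ^ (i + 1))) * ∑' k, T q (x * q ^ n) k := by
  induction n with
  | zero => simp
  | succ n ih =>
    rw [ih, Finset.prod_range_succ, feq hq (x * q ^ n)]
    have h : x * q ^ (n + 1) = x * q ^ n * q := by rw [pow_succ]; ring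
    rw [h]
    ring

lemma tsum_T_zero (hq : ‖q‖ < 1) : ∑' k, T q (0 : ℂ) k = 1 := by
  rw [Summable.tsum_eq_zero_add (summable_T hq 0), T_zero]
  have : ∀ k : ℕ, T q (0 : ℂ) (k + 1) = 0 := by
    intro k
    simp [T]
  rw [tsum_congr this]
  simp

lemma tail (hq : ‖q‖ < 1) (c : ℂ) :
    Tendsto (fun n : ℕ => ∑' k, T q (c * q ^ n) k) atTop (𝓝 1) := by
  rw [← tsum_T_zero hq]
  apply tendsto_tsum_of_dominated_convergence (bound := fun k => ‖T q c k‖)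
  · exact (summable_norm_iff.2 (summable_T hq c))
  · intro k
    cases k with
    | zero =>
      simp only [T_zero]
      exact tendsto_const_nhds
    | succ k =>
      have h : ∀ n : ℕ, T q (c * q ^ n) (k + 1) = T q c (k + 1) * (q ^ (k + 1)) ^ n := by
        intro n
        rw [T_mul q c (q ^ n) (k + 1), ← pow_mul, ← pow_mul, Nat.mul_comm]
      have hlim : Tendsto (fun n : ℕ => (q ^ (k + 1) : ℂ) ^ n) atTop (𝓝 0) := by
        apply tendsto_pow_atTop_nhds_zero_of_norm_lt_one
        rw [norm_pow]
        exact pow_lt_one₀ (norm_nonneg q) (hq' hq) (by omega)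
      have : T q (0 : ℂ) (k + 1) = 0 := by simp [T]
      rw [this]
      simpa [h] using hlim.const_mul (T q c (k + 1))
  · filter_upwards with n k
    rw [T_mul, norm_mul, norm_pow]
    have h1 : ‖q ^ n‖ ≤ 1 := by
      rw [norm_pow]
      exact pow_le_one₀ (norm_nonneg q) (hq' hq).le
    calc ‖T q c k‖ * ‖q ^ n‖ ^ k ≤ ‖T q c k‖ * 1 := by
          exact mul_le_mul_of_nonneg_left (pow_le_one₀ (norm_nonneg _) h1) (norm_nonneg _)
      _ = ‖T q c k‖ := mul_one _

lemma mult (hq : ‖q‖ < 1) (c : ℂ) :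
    Multipliable (fun k : ℕ => 1 - c * q ^ (k + 1)) := by
  by_cases hz : ∀ k : ℕ, 1 - c * q ^ (k + 1) ≠ 0
  · apply Complex.multipliable_of_summable_log (f := fun k => 1 - c * q ^ (k + 1))
    -- Summable fun k => Complex.log (1 - c * q ^ (k + 1))
    have t1 : Tendsto (fun k : ℕ => ‖c * q ^ (k + 1)‖) atTop (𝓝 0) := by
      have := ((qpow_tendsto hq).const_mul c).norm
      simpa using this
    obtain ⟨N, hN⟩ := eventually_atTop.1 (t1.eventually_le_const (by norm_num : (0 : ℝ) < 1 / 2))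
    rw [← summable_nat_add_iff N]
    apply Summable.of_norm_bounded (g := fun k => 3 / 2 * ‖c * q ^ (k + N + 1)‖)
    · have : Summable (fun k : ℕ => ‖q‖ ^ k) :=
        summable_geometric_of_lt_one (norm_nonneg q) (hq' hq)
      apply ((this.mul_left (3 / 2 * (‖c‖ * ‖q‖ ^ (N + 1))))).congr
      intro k
      rw [norm_mul, norm_pow, show k + N + 1 = (N + 1) + k by omega, pow_add]
      ring
    · intro k
      have hk : ‖-(c * q ^ (k + N + 1))‖ ≤ 1 / 2 := by
        rw [norm_neg]
        exact hN (k + N) (by omega)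
      have := Complex.norm_log_one_add_half_le_self hk
      rw [norm_neg] at this
      calc ‖Complex.log (1 - c * q ^ (k + N + 1))‖
          = ‖Complex.log (1 + -(c * q ^ (k + N + 1)))‖ := by rw [sub_eq_add_neg]
        _ ≤ 3 / 2 * ‖c * q ^ (k + N + 1)‖ := this
  · push_neg at hz
    obtain ⟨m, hm⟩ := hz
    refine ⟨0, ?_⟩
    have hev : ∀ᶠ s : Finset ℕ in atTop, ∏ i ∈ s, (1 - c * q ^ (i + 1)) = 0 := by
      filter_upwards [eventually_ge_atTop ({m} : Finset ℕ)] with s hs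
      exact Finset.prod_eq_zero (hs (Finset.mem_singleton_self m)) hm
    exact (tendsto_congr' hev).2 tendsto_const_nhds

end EulerQAux

open EulerQAux in
/-- Euler's identity: for complex `c`, `q` with `|q| < 1`, the series
`1 + ∑_{k≥1} (-1)^k q^(k(k+1)/2) c^k / ((1-q)⋯(1-q^k))` converges and equals
the infinite product `∏_{k≥1} (1 - c q^k)`. -/
theorem euler_q_series_identity (c q : ℂ) (hq : ‖q‖ < 1) :
    Summable (fun k : ℕ =>
      ((-1 : ℂ) ^ (k + 1) * q ^ ((k + 1) * (k + 2) / 2) * c ^ (k + 1)) /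
        ∏ i ∈ Finset.range (k + 1), (1 - q ^ (i + 1))) ∧
    1 + ∑' k : ℕ,
      ((-1 : ℂ) ^ (k + 1) * q ^ ((k + 1) * (k + 2) / 2) * c ^ (k + 1)) /
        ∏ i ∈ Finset.range (k + 1), (1 - q ^ (i + 1)) =
      ∏' k : ℕ, (1 - c * q ^ (k + 1)) := by
  have hf : ∀ k : ℕ, ((-1 : ℂ) ^ (k + 1) * q ^ ((k + 1) * (k + 2) / 2) * c ^ (k + 1)) /
      ∏ i ∈ Finset.range (k + 1), (1 - q ^ (i + 1)) = T q c (k + 1) := fun k => rfl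
  constructor
  · exact ((summable_nat_add_iff 1).2 (summable_T hq c)).congr fun k => (hf k).symm
  · have hS : (1 : ℂ) + ∑' k : ℕ, T q c (k + 1) = ∑' k, T q c k := by
      rw [Summable.tsum_eq_zero_add (summable_T hq c), T_zero]
    have hP := (mult hq c).hasProd.tendsto_prod_nat
    have hcomb := hP.mul (tail hq c)
    rw [mul_one] at hcomb
    have heq : (fun n : ℕ => (∏ i ∈ Finset.range n, (1 - c * q ^ (i + 1))) *
        ∑' k, T q (c * q ^ n) k) = fun _ => ∑' k, T q c k :=
      funext fun n => (iter hq c n).symm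
    rw [heq] at hcomb
    have hfin := tendsto_nhds_unique hcomb tendsto_const_nhds
    rw [tsum_congr hf, hS, hfin]
end

section
/- Let $\alpha > 1$ be a real number. Then $1 + \sum_{k=1}^{\infty} \frac{2^k}{(1-\alpha)(1-\alpha^2)\cdots(1-\alpha^k)} = 0$ if and only if $\alpha = 2^{1/n}$ for some positive integer $n$. -/
open Finset

noncomputable def Pp (α : ℝ) (k : ℕ) : ℝ := ∏ i ∈ Finset.range k, (1 - α ^ (i+1))
noncomputable def aa (α x : ℝ) (k : ℕ) : ℝ := x ^ k / Pp α k

lemma Pp_ne_zero {α : ℝ} (hα : 1 < α) (k : ℕ) : Pp α k ≠ 0 := by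
  refine Finset.prod_ne_zero_iff.mpr fun i _ => ?_
  have : 1 < α ^ (i+1) := one_lt_pow₀ hα (Nat.succ_ne_zero i)
  linarith

lemma Pp_succ (α : ℝ) (k : ℕ) : Pp α (k+1) = Pp α k * (1 - α ^ (k+1)) :=
  Finset.prod_range_succ _ _

lemma aa_zero (α x : ℝ) : aa α x 0 = 1 := by simp [aa, Pp]

lemma aa_succ (α x : ℝ) (k : ℕ) :
    aa α x (k+1) = aa α x k * (x / (1 - α ^ (k+1))) := by
  rw [aa, aa, Pp_succ, div_mul_div_comm, pow_succ]

lemma aa_summable {α : ℝ} (hα : 1 < α) (x : ℝ) : Summable (aa α x) := by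
  apply summable_of_ratio_norm_eventually_le (r := 1/2) (by norm_num)
  have h : Filter.Tendsto (fun k : ℕ => α ^ (k+1)) Filter.atTop Filter.atTop :=
    (tendsto_pow_atTop_atTop_of_one_lt hα).comp (Filter.tendsto_add_atTop_nat 1)
  filter_upwards [h.eventually_ge_atTop (2*|x| + 1)] with k hk
  have h1 : 1 < α ^ (k+1) := one_lt_pow₀ hα (Nat.succ_ne_zero k)
  rw [aa_succ, norm_mul]
  have : ‖x / (1 - α ^ (k+1))‖ ≤ 1/2 := by
    have habs : |1 - α^(k+1)| = α^(k+1) - 1 := by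
      rw [abs_of_nonpos (by linarith : (1:ℝ) - α^(k+1) ≤ 0)]; ring
    rw [norm_div, Real.norm_eq_abs, Real.norm_eq_abs, habs,
      div_le_iff₀ (by linarith)]
    linarith
  calc ‖aa α x k‖ * ‖x / (1 - α ^ (k+1))‖ ≤ ‖aa α x k‖ * (1/2) := by
        exact mul_le_mul_of_nonneg_left this (norm_nonneg _)
    _ = 1/2 * ‖aa α x k‖ := by ring

lemma key_term {α : ℝ} (hα : 1 < α) (x : ℝ) (k : ℕ) :
    aa α (x*α) (k+1) = aa α x (k+1) - x * aa α x k := by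
  have hP := Pp_ne_zero hα k
  have h1 : 1 < α ^ (k+1) := one_lt_pow₀ hα (Nat.succ_ne_zero k)
  have hP' : (1 : ℝ) - α ^ (k+1) ≠ 0 := by linarith
  rw [aa, aa, aa, Pp_succ, mul_pow]
  field_simp
  ring

lemma funceq {α : ℝ} (hα : 1 < α) (x : ℝ) :
    ∑' k, aa α (x*α) k = (1 - x) * ∑' k, aa α x k := by
  have hs := aa_summable hα x
  have hs1 : Summable (fun k => aa α x (k+1)) := (summable_nat_add_iff 1).mpr hs
  have hs2 : Summable (fun k => x * aa α x k) := hs.mul_left x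
  rw [Summable.tsum_eq_zero_add (aa_summable hα (x*α)), Summable.tsum_eq_zero_add hs, aa_zero, aa_zero]
  have : ∑' k, aa α (x*α) (k+1) = ∑' k, (aa α x (k+1) - x * aa α x k) := by
    congr 1; funext k; exact key_term hα x k
  rw [this, Summable.tsum_sub hs1 hs2, tsum_mul_left, Summable.tsum_eq_zero_add hs, aa_zero]
  ring

lemma prod_formula {α : ℝ} (hα : 1 < α) (m : ℕ) :
    ∑' k, aa α 2 k =
      (∏ n ∈ Finset.range m, (1 - 2 * (α⁻¹)^(n+1))) * ∑' k, aa α (2 * (α⁻¹)^m) k := by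
  have hα0 : α ≠ 0 := by positivity
  induction m with
  | zero => simp
  | succ m ih =>
    rw [ih, Finset.prod_range_succ]
    have hx : (2 * (α⁻¹)^(m+1)) * α = 2 * (α⁻¹)^m := by
      rw [pow_succ, mul_assoc, mul_assoc, inv_mul_cancel₀ hα0, mul_one]
    have h := funceq hα (2 * (α⁻¹)^(m+1))
    rw [hx] at h
    rw [h]
    ring

lemma aa_abs {α : ℝ} (hα : 1 < α) (x : ℝ) (k : ℕ) (hx : 0 ≤ x) :
    |aa α x k| = x ^ k / |Pp α k| := by
  rw [aa, abs_div, abs_pow, abs_of_nonneg hx]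

lemma small_ne_zero {α : ℝ} (hα : 1 < α) :
    ∃ m : ℕ, ∑' k, aa α (2 * (α⁻¹)^m) k ≠ 0 := by
  have hα0 : (0:ℝ) < α := by linarith
  set D : ℝ := ∑' k, |aa α 2 (k+1)| with hD
  have hsD : Summable (fun k => |aa α 2 (k+1)|) :=
    ((summable_nat_add_iff 1).mpr (aa_summable hα 2)).abs
  have hD0 : 0 ≤ D := tsum_nonneg fun k => abs_nonneg _
  obtain ⟨m, hm⟩ : ∃ m : ℕ, (α⁻¹)^m < 1/(D+1) := by
    apply exists_pow_lt_of_lt_one (by positivity)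
    exact inv_lt_one_of_one_lt₀ hα
  set t : ℝ := (α⁻¹)^m with ht
  have ht0 : 0 ≤ t := by positivity
  have ht1 : t ≤ 1 := by
    apply pow_le_one₀ (by positivity)
    exact inv_le_one_of_one_le₀ hα.le
  refine ⟨m, ?_⟩
  have hterm : ∀ k : ℕ, |aa α (2*t) (k+1)| ≤ t * |aa α 2 (k+1)| := by
    intro k
    rw [aa_abs hα _ _ (by positivity), aa_abs hα _ _ (by norm_num), mul_pow]
    have hPpos : 0 < |Pp α (k+1)| := abs_pos.mpr (Pp_ne_zero hα _)
    have htk : t^(k+1) ≤ t :=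
      (pow_le_pow_of_le_one ht0 ht1 (by omega)).trans_eq (pow_one t)
    rw [div_le_iff₀ hPpos]
    have heq : t * ((2:ℝ)^(k+1)/|Pp α (k+1)|) * |Pp α (k+1)| = 2^(k+1)*t := by
      field_simp
    rw [heq]
    exact mul_le_mul_of_nonneg_left htk (by positivity)
  have hs' : Summable (fun k => aa α (2*t) (k+1)) :=
    (summable_nat_add_iff 1).mpr (aa_summable hα (2*t))
  have habs : |∑' k, aa α (2*t) (k+1)| ≤ ∑' k, |aa α (2*t) (k+1)| := by
    have h := norm_tsum_le_tsum_norm (f := fun k => aa α (2*t) (k+1))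
      (by simpa only [Real.norm_eq_abs] using hs'.abs)
    simpa only [Real.norm_eq_abs] using h
  have htail : |∑' k, aa α (2*t) (k+1)| < 1 := by
    calc |∑' k, aa α (2*t) (k+1)| ≤ ∑' k, |aa α (2*t) (k+1)| := habs
      _ ≤ ∑' k, t * |aa α 2 (k+1)| := Summable.tsum_le_tsum hterm hs'.abs (hsD.mul_left t)
      _ = t * D := tsum_mul_left
      _ < 1 := by
          have h1 : t * (D+1) < 1 := (lt_div_iff₀ (by positivity)).mp hm
          nlinarith
  rw [Summable.tsum_eq_zero_add (aa_summable hα (2*t)), aa_zero]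
  intro hcon
  have hc2 : ∑' k, aa α (2*t) (k+1) = -1 := by linarith
  rw [hc2] at htail
  norm_num at htail

lemma rpow_of_pow_eq {α : ℝ} (hα : 0 < α) {n : ℕ} (hn : 0 < n) (h : α ^ n = 2) :
    α = (2 : ℝ) ^ ((1 : ℝ) / n) := by
  have hn' : ((n : ℝ)) ≠ 0 := Nat.cast_ne_zero.mpr hn.ne'
  rw [← h, ← Real.rpow_natCast α n, ← Real.rpow_mul hα.le]
  rw [mul_one_div, div_self hn', Real.rpow_one]

/-- For real `α > 1`, `1 + ∑_{k≥1} 2^k / ((1-α)⋯(1-α^k)) = 0` iff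
`α = 2^(1/n)` for some positive integer `n`. -/
theorem characteristic_values (α : ℝ) (hα : 1 < α) :
    1 + ∑' k : ℕ,
      (2 : ℝ) ^ (k + 1) / ∏ i ∈ Finset.range (k + 1), (1 - α ^ (i + 1)) = 0 ↔
    ∃ n : ℕ, 0 < n ∧ α = (2 : ℝ) ^ ((1 : ℝ) / n) := by
  have hα0 : (0:ℝ) < α := by linarith
  have hmain : 1 + (∑' k : ℕ,
      (2 : ℝ) ^ (k + 1) / ∏ i ∈ Finset.range (k + 1), (1 - α ^ (i + 1)))
      = ∑' k, aa α 2 k := by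
    rw [Summable.tsum_eq_zero_add (aa_summable hα 2), aa_zero]
    rfl
  rw [hmain]
  constructor
  · intro h0
    obtain ⟨m, hne⟩ := small_ne_zero hα
    have hp := prod_formula hα m
    rw [h0] at hp
    have hprod : (∏ n ∈ Finset.range m, (1 - 2 * (α⁻¹)^(n+1))) = 0 := by
      rcases mul_eq_zero.mp hp.symm with h | h
      · exact h
      · exact absurd h hne
    obtain ⟨i, _, hi⟩ := Finset.prod_eq_zero_iff.mp hprod
    have hpow : α ^ (i+1) = 2 := by
      have h2 : 2 * (α⁻¹)^(i+1) = 1 := by linarith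
      rw [inv_pow] at h2
      field_simp at h2
      linarith
    exact ⟨i+1, i.succ_pos, rpow_of_pow_eq hα0 i.succ_pos hpow⟩
  · rintro ⟨n, hn, hαeq⟩
    have hpow : α ^ n = 2 := by
      rw [hαeq, ← Real.rpow_natCast ((2:ℝ) ^ ((1:ℝ)/n)) n, ← Real.rpow_mul (by norm_num)]
      rw [one_div, inv_mul_cancel₀ (Nat.cast_ne_zero.mpr hn.ne'), Real.rpow_one]
    rw [prod_formula hα n]
    have hmem : n - 1 ∈ Finset.range n := Finset.mem_range.mpr (by omega)
    have hzero : 1 - 2 * (α⁻¹)^((n-1)+1) = 0 := by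
      have : (n-1)+1 = n := by omega
      rw [this, inv_pow, hpow]
      norm_num
    rw [Finset.prod_eq_zero hmem hzero, zero_mul]
end

section
/- Let $\alpha > 1$ and define $E(t;\alpha) = e^{-t}\left(1 + \sum_{k=1}^{\infty} \frac{2^k e^{(1-\alpha^k)t}}{(1-\alpha)(1-\alpha^2)\cdots(1-\alpha^k)}\right)$ for $t \geq 0$. Then $E$ is differentiable on $(0,\infty)$ and satisfies the functional differential equation $E'(t;\alpha) + E(t;\alpha) = 2E(\alpha t;\alpha)$ for all $t > 0$. -/
open Finset

noncomputable def cc (α : ℝ) (k : ℕ) : ℝ :=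
  2 ^ k / ∏ i ∈ Finset.range k, (1 - α ^ (i + 1))

noncomputable def FF (α : ℝ) (n : ℕ) (x : ℝ) : ℝ :=
  cc α n * Real.exp (-(α ^ n * x))

lemma cc_zero (α : ℝ) : cc α 0 = 1 := by simp [cc]

lemma factor_ne {α : ℝ} (hα : 1 < α) (i : ℕ) : (1 - α ^ (i + 1)) ≠ 0 := by
  have : 1 < α ^ (i + 1) := one_lt_pow₀ hα (Nat.succ_ne_zero i)
  linarith

lemma prod_ne {α : ℝ} (hα : 1 < α) (k : ℕ) :
    (∏ i ∈ Finset.range k, (1 - α ^ (i + 1))) ≠ 0 :=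
  Finset.prod_ne_zero_iff.2 fun i _ => factor_ne hα i

lemma cc_rec {α : ℝ} (hα : 1 < α) (k : ℕ) :
    cc α (k + 1) * (1 - α ^ (k + 1)) = 2 * cc α k := by
  have h1 := factor_ne hα k
  have h2 := prod_ne hα k
  simp only [cc, Finset.prod_range_succ]
  field_simp
  ring

lemma cc_abs_rec {α : ℝ} (hα : 1 < α) (k : ℕ) :
    |cc α (k + 1)| ≤ 2 / (α - 1) * |cc α k| := by
  have h1 := factor_ne hα k
  have hgt : 1 < α ^ (k + 1) := one_lt_pow₀ hα (Nat.succ_ne_zero k)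
  have hge : α ≤ α ^ (k + 1) := by
    calc α = α ^ 1 := (pow_one α).symm
    _ ≤ α ^ (k + 1) := pow_le_pow_right₀ hα.le (Nat.le_add_left 1 k)
  have heq : cc α (k + 1) = 2 * cc α k / (1 - α ^ (k + 1)) :=
    (eq_div_of_mul_eq h1 (cc_rec hα k))
  rw [heq, abs_div, abs_of_neg (by linarith : (1 : ℝ) - α ^ (k + 1) < 0)]
  have h2 : -(1 - α ^ (k + 1)) = α ^ (k + 1) - 1 := by ring
  rw [h2, abs_mul, abs_of_nonneg (by norm_num : (0:ℝ) ≤ 2)]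
  rw [div_le_iff₀ (by linarith : (0:ℝ) < α ^ (k + 1) - 1)]
  rw [div_mul_eq_mul_div, div_mul_eq_mul_div, le_div_iff₀ (by linarith : (0:ℝ) < α - 1)]
  nlinarith [abs_nonneg (cc α k)]

lemma summable_bound {α : ℝ} (hα : 1 < α) {s : ℝ} (hs : 0 < s) :
    Summable (fun n : ℕ => |cc α n| * α ^ n * Real.exp (-(α ^ n * s))) := by
  have hα0 : (0:ℝ) < α := by linarith
  apply summable_of_ratio_norm_eventually_le (r := 1/2) (by norm_num)
  -- the ratio factor tends to 0
  have h1 : Filter.Tendsto (fun n : ℕ => α ^ n) Filter.atTop Filter.atTop :=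
    tendsto_pow_atTop_atTop_of_one_lt hα
  have h2 : Filter.Tendsto (fun n : ℕ => α ^ n * ((α - 1) * s)) Filter.atTop Filter.atTop :=
    h1.atTop_mul_const (by nlinarith)
  have h3 : Filter.Tendsto (fun n : ℕ => Real.exp (-(α ^ n * ((α - 1) * s))))
      Filter.atTop (nhds 0) := Real.tendsto_exp_neg_atTop_nhds_zero.comp h2
  have h4 : Filter.Tendsto (fun n : ℕ => 2 * α / (α - 1) * Real.exp (-(α ^ n * ((α - 1) * s))))
      Filter.atTop (nhds (2 * α / (α - 1) * 0)) := h3.const_mul _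
  rw [mul_zero] at h4
  have h5 : ∀ᶠ n : ℕ in Filter.atTop,
      2 * α / (α - 1) * Real.exp (-(α ^ n * ((α - 1) * s))) ≤ 1/2 :=
    h4.eventually_le_const (by norm_num)
  filter_upwards [h5] with n hn
  have hexp : Real.exp (-(α ^ (n + 1) * s)) =
      Real.exp (-(α ^ n * ((α - 1) * s))) * Real.exp (-(α ^ n * s)) := by
    rw [← Real.exp_add]; congr 1; ring
  have hnn : (0:ℝ) ≤ |cc α n| * α ^ n * Real.exp (-(α ^ n * s)) := by positivity
  rw [Real.norm_eq_abs, Real.norm_eq_abs, abs_of_nonneg (by positivity),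
    abs_of_nonneg hnn]
  calc |cc α (n + 1)| * α ^ (n + 1) * Real.exp (-(α ^ (n + 1) * s))
      ≤ (2 / (α - 1) * |cc α n|) * α ^ (n + 1) * Real.exp (-(α ^ (n + 1) * s)) := by
        gcongr
        exact cc_abs_rec hα n
    _ = (2 * α / (α - 1) * Real.exp (-(α ^ n * ((α - 1) * s)))) *
        (|cc α n| * α ^ n * Real.exp (-(α ^ n * s))) := by
        rw [hexp, pow_succ]; ring
    _ ≤ 1/2 * (|cc α n| * α ^ n * Real.exp (-(α ^ n * s))) :=
        mul_le_mul_of_nonneg_right hn hnn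

lemma summable_FF {α : ℝ} (hα : 1 < α) {s : ℝ} (hs : 0 < s) :
    Summable (fun n : ℕ => FF α n s) := by
  apply Summable.of_norm
  apply Summable.of_nonneg_of_le (fun n => norm_nonneg _) _ (summable_bound hα hs)
  intro n
  have h1 : (1:ℝ) ≤ α ^ n := one_le_pow₀ hα.le
  rw [FF, norm_mul, Real.norm_eq_abs, Real.norm_eq_abs,
    abs_of_nonneg (Real.exp_pos _).le]
  calc |cc α n| * Real.exp (-(α ^ n * s)) = |cc α n| * 1 * Real.exp (-(α ^ n * s)) := by ring
    _ ≤ |cc α n| * α ^ n * Real.exp (-(α ^ n * s)) := by gcongr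

lemma summable_GG {α : ℝ} (hα : 1 < α) {s : ℝ} (hs : 0 < s) :
    Summable (fun n : ℕ => cc α n * (1 - α ^ n) * Real.exp (-(α ^ n * s))) := by
  apply Summable.of_norm
  apply Summable.of_nonneg_of_le (fun n => norm_nonneg _) _ (summable_bound hα hs)
  intro n
  have h1 : (1:ℝ) ≤ α ^ n := one_le_pow₀ hα.le
  have h2 : |1 - α ^ n| ≤ α ^ n := by
    rw [abs_of_nonpos (by linarith)]; linarith
  rw [norm_mul, norm_mul, Real.norm_eq_abs, Real.norm_eq_abs, Real.norm_eq_abs,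
    abs_of_nonneg (Real.exp_pos _).le]
  gcongr


lemma E_eq {α : ℝ} (hα : 1 < α) {s : ℝ} (hs : 0 < s) :
    Real.exp (-s) * (1 + ∑' k : ℕ,
        (2 : ℝ) ^ (k + 1) * Real.exp ((1 - α ^ (k + 1)) * s) /
          ∏ i ∈ Finset.range (k + 1), (1 - α ^ (i + 1))) = ∑' n : ℕ, FF α n s := by
  have hsum : Summable (fun n => FF α n s) := summable_FF hα hs
  rw [Summable.tsum_eq_zero_add hsum]
  have hF0 : FF α 0 s = Real.exp (-s) := by simp [FF, cc_zero]
  have hterm : ∀ n : ℕ, Real.exp (-s) * ((2 : ℝ) ^ (n + 1) * Real.exp ((1 - α ^ (n + 1)) * s) /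
      ∏ i ∈ Finset.range (n + 1), (1 - α ^ (i + 1))) = FF α (n + 1) s := by
    intro n
    have h1 : Real.exp (-s) * Real.exp ((1 - α ^ (n + 1)) * s) =
        Real.exp (-(α ^ (n + 1) * s)) := by
      rw [← Real.exp_add]; congr 1; ring
    rw [FF, cc, ← h1]
    ring
  calc Real.exp (-s) * (1 + ∑' k : ℕ, (2 : ℝ) ^ (k + 1) * Real.exp ((1 - α ^ (k + 1)) * s) /
          ∏ i ∈ Finset.range (k + 1), (1 - α ^ (i + 1)))
      = Real.exp (-s) + ∑' k : ℕ, Real.exp (-s) *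
          ((2 : ℝ) ^ (k + 1) * Real.exp ((1 - α ^ (k + 1)) * s) /
          ∏ i ∈ Finset.range (k + 1), (1 - α ^ (i + 1))) := by
        rw [tsum_mul_left]; ring
    _ = FF α 0 s + ∑' k : ℕ, FF α (k + 1) s := by
        rw [hF0]
        congr 1
        exact tsum_congr hterm

/-- For `α > 1`, the series solution `E(t;α)` is differentiable on `(0,∞)` and
satisfies `E'(t) + E(t) = 2 E(α t)` for all `t > 0`. -/
theorem series_solution_satisfies_fde (α : ℝ) (hα : 1 < α)
    (E : ℝ → ℝ)
    (hE : ∀ t : ℝ, E t = Real.exp (-t) *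
      (1 + ∑' k : ℕ,
        (2 : ℝ) ^ (k + 1) * Real.exp ((1 - α ^ (k + 1)) * t) /
          ∏ i ∈ Finset.range (k + 1), (1 - α ^ (i + 1)))) :
    ∀ t : ℝ, 0 < t → HasDerivAt E (2 * E (α * t) - E t) t := by
  have hα0 : (0:ℝ) < α := by linarith
  intro t ht
  have hEeq : ∀ s : ℝ, 0 < s → E s = ∑' n : ℕ, FF α n s := by
    intro s hs
    rw [hE s]
    exact E_eq hα hs
  -- termwise differentiation on Ioi (t/2)
  have ht2 : (0:ℝ) < t / 2 := by linarith
  have hderiv : HasDerivAt (fun x => ∑' n : ℕ, FF α n x)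
      (∑' n : ℕ, cc α n * (Real.exp (-(α ^ n * t)) * -(α ^ n))) t := by
    apply hasDerivAt_tsum_of_isPreconnected
      (g' := fun n x => cc α n * (Real.exp (-(α ^ n * x)) * -(α ^ n)))
      (summable_bound hα ht2) isOpen_Ioi (isPreconnected_Ioi) (y₀ := t)
    · intro n y _
      have hinner : HasDerivAt (fun x : ℝ => -(α ^ n * x)) (-(α ^ n)) y := by
        simpa using ((hasDerivAt_id y).const_mul (α ^ n)).fun_neg
      exact ((Real.hasDerivAt_exp _).comp y hinner).const_mul (cc α n)
    · intro n y hy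
      have hy' : t / 2 ≤ y := le_of_lt hy
      have hpn : (0:ℝ) < α ^ n := pow_pos hα0 n
      rw [Real.norm_eq_abs, abs_mul, abs_mul, abs_of_nonneg (Real.exp_pos _).le,
        abs_neg, abs_of_nonneg hpn.le]
      have : Real.exp (-(α ^ n * y)) ≤ Real.exp (-(α ^ n * (t / 2))) := by
        apply Real.exp_le_exp.2
        nlinarith
      calc |cc α n| * (Real.exp (-(α ^ n * y)) * α ^ n)
          ≤ |cc α n| * (Real.exp (-(α ^ n * (t / 2))) * α ^ n) := by gcongr
        _ = |cc α n| * α ^ n * Real.exp (-(α ^ n * (t / 2))) := by ring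
    · exact Set.mem_Ioi.2 (by linarith)
    · exact summable_FF hα ht
    · exact Set.mem_Ioi.2 (by linarith)
  have hEF : E =ᶠ[nhds t] fun x => ∑' n : ℕ, FF α n x := by
    filter_upwards [Ioi_mem_nhds ht] with x hx
    exact hEeq x hx
  have hderivE : HasDerivAt E
      (∑' n : ℕ, cc α n * (Real.exp (-(α ^ n * t)) * -(α ^ n))) t :=
    hderiv.congr_of_eventuallyEq hEF
  -- identify the derivative
  have hαt : 0 < α * t := by positivity
  have hFt : Summable (fun n => FF α n t) := summable_FF hα ht
  have hG : Summable (fun n : ℕ => cc α n * (1 - α ^ n) * Real.exp (-(α ^ n * t))) :=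
    summable_GG hα ht
  have hkey : (∑' n : ℕ, cc α n * (Real.exp (-(α ^ n * t)) * -(α ^ n)))
      = 2 * E (α * t) - E t := by
    have hsplit : ∀ n : ℕ, cc α n * (Real.exp (-(α ^ n * t)) * -(α ^ n)) =
        cc α n * (1 - α ^ n) * Real.exp (-(α ^ n * t)) - FF α n t := by
      intro n; rw [FF]; ring
    rw [tsum_congr hsplit, Summable.tsum_sub hG hFt]
    have hGsum : (∑' n : ℕ, cc α n * (1 - α ^ n) * Real.exp (-(α ^ n * t)))
        = 2 * E (α * t) := by
      rw [Summable.tsum_eq_zero_add hG]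
      have h0 : cc α 0 * (1 - α ^ 0) * Real.exp (-(α ^ 0 * t)) = 0 := by simp
      have hshift : ∀ n : ℕ, cc α (n + 1) * (1 - α ^ (n + 1)) * Real.exp (-(α ^ (n + 1) * t))
          = 2 * FF α n (α * t) := by
        intro n
        rw [FF, cc_rec hα n]
        have : α ^ (n + 1) * t = α ^ n * (α * t) := by ring
        rw [this]; ring
      rw [h0, zero_add, tsum_congr hshift, tsum_mul_left, hEeq (α * t) hαt]
    rw [hGsum, hEeq t ht]
  rwa [hkey] at hderivE
end

section
/- Let $\alpha > 1$ and let $E(t;\alpha)$ be the series solution $E(t;\alpha) = e^{-t}\left(1 + \sum_{k=1}^{\infty} \frac{2^k e^{(1-\alpha^k)t}}{(1-\alpha)\cdots(1-\alpha^k)}\right)$. Then $E(0;\alpha) = \prod_{k=1}^{\infty}\left(1 - \frac{2}{\alpha^k}\right)$. -/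
open Finset Filter Topology

/-! Auxiliary definitions: `Gaux q n k` is the "incomplete q-Pochhammer" factor
`∏_{i<k} (1 - q^(n-k+i+1))` (with integer exponents), and `taux α k` is the `k`-th
coefficient `2^k / ∏_{i<k} (1 - α^(i+1))` of the series. -/

noncomputable def Gaux (q : ℝ) (n k : ℕ) : ℝ :=
  ∏ i ∈ Finset.range k, (1 - q ^ ((n : ℤ) - k + i + 1))

noncomputable def taux (α : ℝ) (k : ℕ) : ℝ :=
  2 ^ k / ∏ i ∈ Finset.range k, (1 - α ^ (i + 1))

lemma Gaux_zero (q : ℝ) (n : ℕ) : Gaux q n 0 = 1 := by simp [Gaux]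

lemma Gaux_succ_succ (q : ℝ) (n k : ℕ) :
    Gaux q (n + 1) (k + 1) = Gaux q n k * (1 - q ^ ((n : ℤ) + 1)) := by
  rw [Gaux, Finset.prod_range_succ]
  congr 1
  · refine Finset.prod_congr rfl fun i _ => ?_
    congr 2
    push_cast; ring
  · congr 2
    push_cast; ring

lemma Gaux_peel_first (q : ℝ) (n k : ℕ) :
    Gaux q n (k + 1) = (1 - q ^ ((n : ℤ) - k)) * Gaux q n k := by
  rw [Gaux, Gaux, Finset.prod_range_succ', mul_comm]
  congr 1
  · congr 2
    push_cast; ring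
  · refine Finset.prod_congr rfl fun i _ => ?_
    congr 2
    push_cast; ring

lemma Gaux_eq_zero (q : ℝ) {n k : ℕ} (h : n < k) : Gaux q n k = 0 := by
  apply Finset.prod_eq_zero (i := k - n - 1)
  · simp only [Finset.mem_range]
    omega
  · have : (n : ℤ) - k + (k - n - 1 : ℕ) + 1 = 0 := by
      have : ((k - n - 1 : ℕ) : ℤ) = (k : ℤ) - n - 1 := by omega
      rw [this]; ring
    rw [this, zpow_zero, sub_self]

lemma Gaux_pascal {q : ℝ} (hq : q ≠ 0) (n k : ℕ) :
    Gaux q (n + 1) (k + 1)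
      = Gaux q n (k + 1) + q ^ ((n : ℤ) - k) * (1 - q ^ (k + 1)) * Gaux q n k := by
  have key : q ^ ((n:ℤ)-k) * q ^ (k+1 : ℕ) = q ^ ((n:ℤ)+1) := by
    rw [← zpow_natCast q (k+1), ← zpow_add₀ hq]
    congr 1; push_cast; ring
  rw [Gaux_succ_succ, Gaux_peel_first]
  linear_combination (Gaux q n k) * key

lemma pow_ne_one' {α : ℝ} (hα : 1 < α) (k : ℕ) : (1 : ℝ) - α ^ (k + 1) ≠ 0 := by
  have : 1 < α ^ (k + 1) := one_lt_pow₀ hα (Nat.succ_ne_zero k)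
  linarith

lemma taux_ne_zero {α : ℝ} (hα : 1 < α) (k : ℕ) : taux α k ≠ 0 := by
  apply div_ne_zero (by positivity)
  exact Finset.prod_ne_zero_iff.2 fun i _ => pow_ne_one' hα i

lemma taux_succ (α : ℝ) (k : ℕ) : taux α (k + 1) = 2 / (1 - α ^ (k + 1)) * taux α k := by
  rw [taux, taux, Finset.prod_range_succ, pow_succ, div_mul_div_comm]
  ring

lemma taux_rec {α : ℝ} (hα : 1 < α) (k : ℕ) :
    taux α (k+1) * (1 - α⁻¹^(k+1)) = -2 * α⁻¹^(k+1) * taux α k := by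
  rw [taux_succ]
  have h := pow_ne_one' hα k
  have hα0 : (0:ℝ) < α := lt_trans one_pos hα
  field_simp
  have e : α * α⁻¹ = 1 := mul_inv_cancel₀ hα0.ne'
  have e2 : α ^ k * α⁻¹ ^ k = 1 := by rw [← mul_pow, e, one_pow]
  linear_combination (-taux α k) * e + (-taux α k * α * α⁻¹) * e2

/-- The finite form of Euler's identity (`q`-binomial theorem specialised at `c = 2`). -/
lemma key_identity {α : ℝ} (hα : 1 < α) (n : ℕ) :
    ∏ j ∈ Finset.range n, (1 - 2 * α⁻¹ ^ (j + 1))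
      = ∑ k ∈ Finset.range (n + 1), taux α k * Gaux α⁻¹ n k := by
  have hα0 : (0:ℝ) < α := lt_trans one_pos hα
  have hq : (α⁻¹:ℝ) ≠ 0 := by positivity
  induction n with
  | zero => simp [taux, Gaux]
  | succ n ih =>
    have hstep : ∀ k ∈ Finset.range (n+1),
        taux α (k+1) * Gaux α⁻¹ (n+1) (k+1)
          = taux α (k+1) * Gaux α⁻¹ n (k+1)
            + (-2 * α⁻¹ ^ (n+1)) * (taux α k * Gaux α⁻¹ n k) := by
      intro k _
      rw [Gaux_pascal hq]
      have h1 := taux_rec hα k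
      have h2 : (α⁻¹:ℝ) ^ ((n:ℤ)-k) * α⁻¹ ^ (k+1:ℕ) = α⁻¹ ^ (n+1:ℕ) := by
        rw [← zpow_natCast (α⁻¹:ℝ) (k+1), ← zpow_natCast (α⁻¹:ℝ) (n+1), ← zpow_add₀ hq]
        congr 1; push_cast; ring
      linear_combination (α⁻¹ ^ ((n:ℤ)-k) * Gaux α⁻¹ n k) * h1
        + (-2 * taux α k * Gaux α⁻¹ n k) * h2
    rw [Finset.prod_range_succ, ih, Finset.sum_range_succ' _ (n+1),
      Finset.sum_congr rfl hstep, Finset.sum_add_distrib]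
    have hA : ∑ k ∈ Finset.range (n+1), taux α (k+1) * Gaux α⁻¹ n (k+1)
        + taux α 0 * Gaux α⁻¹ (n+1) 0
        = ∑ k ∈ Finset.range (n+1), taux α k * Gaux α⁻¹ n k := by
      rw [Gaux_zero]
      have h0 : taux α 0 * Gaux α⁻¹ n 0 = taux α 0 * 1 := by rw [Gaux_zero]
      rw [← h0, ← Finset.sum_range_succ' (fun k => taux α k * Gaux α⁻¹ n k) (n+1),
        Finset.sum_range_succ, Gaux_eq_zero α⁻¹ (Nat.lt_succ_self n), mul_zero, add_zero]
    have hB : ∑ k ∈ Finset.range (n+1), (-2 * α⁻¹ ^ (n+1)) * (taux α k * Gaux α⁻¹ n k)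
        = (-2 * α⁻¹ ^ (n+1)) * ∑ k ∈ Finset.range (n+1), taux α k * Gaux α⁻¹ n k :=
      (Finset.mul_sum _ _ _).symm
    rw [add_right_comm, hA, hB]
    ring

lemma Gaux_abs_le_one {q : ℝ} (hq0 : 0 < q) (hq1 : q < 1) (n k : ℕ) :
    |Gaux q n (k + 1)| ≤ 1 := by
  rcases lt_or_ge n (k + 1) with h | h
  · rw [Gaux_eq_zero q h, abs_zero]; exact zero_le_one
  · have hfac : ∀ i ∈ Finset.range (k + 1),
        (0:ℝ) ≤ 1 - q ^ ((n : ℤ) - (k+1:ℕ) + i + 1) ∧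
        1 - q ^ ((n : ℤ) - (k+1:ℕ) + i + 1) ≤ 1 := by
      intro i hi
      have he : (1:ℤ) ≤ (n : ℤ) - (k+1:ℕ) + i + 1 := by
        simp only [Finset.mem_range] at hi
        push_cast
        omega
      have h1 : q ^ ((n : ℤ) - (k+1:ℕ) + i + 1) ≤ q := by
        have := zpow_le_zpow_right_of_le_one₀ hq0 hq1.le he
        rwa [zpow_one] at this
      have h2 : (0:ℝ) < q ^ ((n : ℤ) - (k+1:ℕ) + i + 1) := zpow_pos hq0 _
      constructor <;> nlinarith
    rw [Gaux, abs_of_nonneg (Finset.prod_nonneg fun i hi => (hfac i hi).1)]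
    exact Finset.prod_le_one (fun i hi => (hfac i hi).1) (fun i hi => (hfac i hi).2)

lemma Gaux_tendsto {q : ℝ} (hq0 : 0 < q) (hq1 : q < 1) (k : ℕ) :
    Tendsto (fun n => Gaux q n (k + 1)) atTop (𝓝 1) := by
  have h1 : (1:ℝ) = ∏ i ∈ Finset.range (k+1), (1 - q ^ ((i:ℤ) - k) * 0) := by simp
  rw [h1]
  apply tendsto_finset_prod
  intro i _
  have hrw : ∀ n : ℕ, (1 : ℝ) - q ^ ((n : ℤ) - (k+1:ℕ) + i + 1)
      = 1 - q ^ ((i:ℤ) - k) * q ^ n := by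
    intro n
    congr 1
    rw [← zpow_natCast q n, ← zpow_add₀ hq0.ne']
    congr 1
    push_cast; ring
  refine Tendsto.congr (fun n => (hrw n).symm) ?_
  exact tendsto_const_nhds.sub
    (((tendsto_pow_atTop_nhds_zero_of_lt_one hq0.le hq1)).const_mul _)

lemma taux_abs_summable {α : ℝ} (hα : 1 < α) :
    Summable (fun k => |taux α (k + 1)|) := by
  have hα0 : (0:ℝ) < α := lt_trans one_pos hα
  have hratio : Tendsto (fun k : ℕ => ‖taux α (k + 1 + 1)‖ / ‖taux α (k + 1)‖)
      atTop (𝓝 0) := by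
    have heq : ∀ k : ℕ, ‖taux α (k + 1 + 1)‖ / ‖taux α (k + 1)‖
        = 2 / (α ^ (k + 2) - 1) := by
      intro k
      have h2 : (1:ℝ) < α ^ (k + 2) := one_lt_pow₀ hα (by omega)
      rw [show k + 1 + 1 = k + 2 from rfl, taux_succ, norm_mul, mul_div_assoc,
        div_self (by simpa using norm_ne_zero_iff.2 (taux_ne_zero hα (k+1))), mul_one,
        Real.norm_eq_abs, abs_div, abs_two, abs_of_neg (by linarith)]
      rw [neg_sub]
    refine Tendsto.congr (fun k => (heq k).symm) ?_
    apply Tendsto.div_atTop tendsto_const_nhds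
    have := (tendsto_pow_atTop_atTop_of_one_lt hα).comp (tendsto_add_atTop_nat 2)
    exact tendsto_atTop_add_const_right _ (-1) this |>.congr (fun k => by
      simp [Function.comp]; ring)
  have : Summable (fun k => taux α (k + 1)) :=
    summable_of_ratio_test_tendsto_lt_one one_pos
      (Eventually.of_forall fun k => taux_ne_zero hα (k+1)) hratio
  exact this.abs

/-- The partial sums `∑_{k ≤ n} taux α k * Gaux α⁻¹ n k` tend to `1 + ∑' k, taux α (k+1)`,
by Tannery's theorem (dominated convergence for series). -/
lemma sum_tendsto {α : ℝ} (hα : 1 < α) :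
    Tendsto (fun n => ∑ k ∈ Finset.range (n + 1), taux α k * Gaux α⁻¹ n k)
      atTop (𝓝 (1 + ∑' k, taux α (k + 1))) := by
  have hα0 : (0:ℝ) < α := lt_trans one_pos hα
  have hq0 : (0:ℝ) < α⁻¹ := by positivity
  have hq1 : (α⁻¹:ℝ) < 1 := inv_lt_one_of_one_lt₀ hα
  have htan : Tendsto (fun n => ∑' k, taux α (k + 1) * Gaux α⁻¹ n (k + 1))
      atTop (𝓝 (∑' k, taux α (k + 1))) := by
    exact tendsto_tsum_of_dominated_convergence
      (f := fun (n k : ℕ) => taux α (k + 1) * Gaux α⁻¹ n (k + 1))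
      (g := fun k => taux α (k + 1))
      (bound := fun k => |taux α (k + 1)|)
      (taux_abs_summable hα)
      (fun k => by
        simpa using (Gaux_tendsto hq0 hq1 k).const_mul (taux α (k + 1)))
      (Eventually.of_forall fun n k => by
        rw [Real.norm_eq_abs, abs_mul]
        calc |taux α (k+1)| * |Gaux α⁻¹ n (k+1)| ≤ |taux α (k+1)| * 1 :=
              mul_le_mul_of_nonneg_left (Gaux_abs_le_one hq0 hq1 n k) (abs_nonneg _)
          _ = |taux α (k+1)| := mul_one _)
  have hfin : ∀ n : ℕ, ∑' k, taux α (k + 1) * Gaux α⁻¹ n (k + 1)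
      = ∑ k ∈ Finset.range n, taux α (k + 1) * Gaux α⁻¹ n (k + 1) := by
    intro n
    apply tsum_eq_sum
    intro k hk
    rw [Finset.mem_range, not_lt] at hk
    rw [Gaux_eq_zero α⁻¹ (by omega), mul_zero]
  have hsum : ∀ n : ℕ, ∑ k ∈ Finset.range (n + 1), taux α k * Gaux α⁻¹ n k
      = (∑' k, taux α (k + 1) * Gaux α⁻¹ n (k + 1)) + 1 := by
    intro n
    rw [hfin n, Finset.sum_range_succ' (fun k => taux α k * Gaux α⁻¹ n k) n]
    congr 1
    simp [taux, Gaux_zero]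
  refine Tendsto.congr (fun n => (hsum n).symm) ?_
  have := htan.add_const 1
  rwa [add_comm] at this

lemma log_one_sub_bound (x : ℝ) (h0 : 0 ≤ x) (h2 : x ≤ 1/2) :
    |Real.log (1 - x)| ≤ 2 * x := by
  have hx1 : (0:ℝ) < 1 - x := by linarith
  have hlow : Real.exp (-(2 * x)) ≤ 1 - x := by
    have h1 : 1 + 2 * x ≤ Real.exp (2 * x) := by
      linarith [Real.add_one_le_exp (2 * x)]
    have hpos : (0:ℝ) < 1 + 2 * x := by linarith
    rw [Real.exp_neg, inv_le_comm₀ (Real.exp_pos _) hx1]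
    have hinv : (1 - x)⁻¹ ≤ 1 + 2 * x := by
      rw [inv_le_iff_one_le_mul₀ hx1]
      nlinarith
    linarith
  have hlog : -(2 * x) ≤ Real.log (1 - x) := by
    have := Real.log_le_log (Real.exp_pos _) hlow
    rwa [Real.log_exp] at this
  have hneg : Real.log (1 - x) ≤ 0 := Real.log_nonpos (by linarith) (by linarith)
  rw [abs_of_nonpos hneg]
  linarith

set_option maxHeartbeats 1000000 in
/-- The infinite product `∏ (1 - 2 α⁻¹^(j+1))` is multipliable. -/
lemma prod_multipliable {α : ℝ} (hα : 1 < α) :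
    Multipliable (fun j : ℕ => 1 - 2 * α⁻¹ ^ (j + 1)) := by
  have hα0 : (0:ℝ) < α := lt_trans one_pos hα
  have hq0 : (0:ℝ) < α⁻¹ := by positivity
  have hq1 : (α⁻¹:ℝ) < 1 := inv_lt_one_of_one_lt₀ hα
  obtain ⟨N, hN⟩ : ∃ N : ℕ, ∀ k ≥ N, 2 * α⁻¹ ^ (k + 1) ≤ 1/2 := by
    have h : Tendsto (fun k : ℕ => 2 * α⁻¹ ^ (k + 1)) atTop (𝓝 (2 * 0)) := by
      exact ((tendsto_pow_atTop_nhds_zero_of_lt_one hq0.le hq1).comp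
        (tendsto_add_atTop_nat 1)).const_mul 2
    rw [mul_zero] at h
    exact eventually_atTop.1 (h.eventually (eventually_le_nhds one_half_pos))
  have hxle : ∀ n : ℕ, 2 * α⁻¹ ^ (n + N + 1) ≤ 1/2 := fun n => hN (n + N) (by omega)
  have hxpos : ∀ n : ℕ, (0:ℝ) ≤ 2 * α⁻¹ ^ (n + N + 1) := fun n => by positivity
  have hfpos : ∀ n : ℕ, (0:ℝ) < 1 - 2 * α⁻¹ ^ (n + N + 1) := fun n => by
    linarith [hxle n]
  have hlog : Summable (fun n : ℕ => Real.log (1 - 2 * α⁻¹ ^ (n + N + 1))) := by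
    apply Summable.of_norm_bounded (g := fun n : ℕ => (4 * α⁻¹ ^ (N + 1)) * α⁻¹ ^ n)
    · exact (summable_geometric_of_lt_one hq0.le hq1).mul_left _
    · intro n
      have := log_one_sub_bound _ (hxpos n) (hxle n)
      calc ‖Real.log (1 - 2 * α⁻¹ ^ (n + N + 1))‖ ≤ 2 * (2 * α⁻¹ ^ (n + N + 1)) := this
        _ = (4 * α⁻¹ ^ (N + 1)) * α⁻¹ ^ n := by
            rw [show n + N + 1 = (N + 1) + n by ring, pow_add]; ring
  have htail : HasProd (fun n : ℕ => 1 - 2 * α⁻¹ ^ (n + N + 1))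
      (Real.exp (∑' n, Real.log (1 - 2 * α⁻¹ ^ (n + N + 1)))) := by
    have h := hlog.hasSum.rexp
    have heq : (Real.exp ∘ fun n : ℕ => Real.log (1 - 2 * α⁻¹ ^ (n + N + 1)))
        = fun n : ℕ => 1 - 2 * α⁻¹ ^ (n + N + 1) :=
      funext fun n => Real.exp_log (hfpos n)
    rwa [heq] at h
  have htail' : HasProd (fun n : ℕ => 1 - 2 * α⁻¹ ^ ((n + N) + 1)) _ := htail
  exact (HasProd.prod_range_mul htail').multipliable

/-- For `α > 1`, the series solution satisfies `E(0;α) = ∏_{k≥1} (1 - 2/α^k)`. -/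
theorem series_solution_at_zero (α : ℝ) (hα : 1 < α)
    (E : ℝ → ℝ)
    (hE : ∀ t : ℝ, E t = Real.exp (-t) *
      (1 + ∑' k : ℕ,
        (2 : ℝ) ^ (k + 1) * Real.exp ((1 - α ^ (k + 1)) * t) /
          ∏ i ∈ Finset.range (k + 1), (1 - α ^ (i + 1)))) :
    E 0 = ∏' k : ℕ, (1 - 2 / α ^ (k + 1)) := by
  have hlim1 : Tendsto (fun n => ∏ j ∈ Finset.range n, (1 - 2 * α⁻¹ ^ (j + 1)))
      atTop (𝓝 (1 + ∑' k, taux α (k + 1))) :=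
    (sum_tendsto hα).congr (fun n => (key_identity hα n).symm)
  have hlim2 := (prod_multipliable hα).hasProd.tendsto_prod_nat
  have hprod_eq : ∏' j : ℕ, (1 - 2 * α⁻¹ ^ (j + 1)) = 1 + ∑' k, taux α (k + 1) :=
    tendsto_nhds_unique hlim2 hlim1
  have hrhs : ∏' k : ℕ, (1 - 2 / α ^ (k + 1)) = ∏' j : ℕ, (1 - 2 * α⁻¹ ^ (j + 1)) :=
    tprod_congr fun k => by rw [div_eq_mul_inv, inv_pow]
  rw [hE 0, hrhs, hprod_eq]
  simp only [neg_zero, Real.exp_zero, mul_zero, one_mul, mul_one]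
  congr 1
end

section
/- Let $\alpha > 0$, $j \geq 1$ an integer, and suppose $v : [0,\infty) \to \mathbb{R}$ is continuously differentiable, satisfies $v'(t) + v(t) = 2v(\alpha t) + v(\alpha t)^2$ for all $t > 0$, with $v(0) = 0$, $t^j v(t) \to 0$ as $t \to \infty$, and $t^j v$, $t^{j-1}v$, $t^j v^2$, and $t^j v'$ are integrable on $[0,\infty)$. Writing $\mu_j(f) = \int_0^\infty t^j f(t)\,dt$, we have $(\alpha^{j+1} - 2)\mu_j(v) - j\alpha^{j+1}\mu_{j-1}(v) - \mu_j(v^2) = 0$. -/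
open MeasureTheory Set Filter

lemma subst_int_aux (α : ℝ) (hα : 0 < α) (j : ℕ) (g : ℝ → ℝ)
    (hg : IntegrableOn (fun t => t ^ j * g t) (Ioi 0)) :
    IntegrableOn (fun t => t ^ j * g (α * t)) (Ioi 0) := by
  have h : IntegrableOn (fun t => (α * t) ^ j * g (α * t)) (Ioi 0) :=
    (integrableOn_Ioi_comp_mul_left_iff (fun t => t ^ j * g t) 0 hα).mpr (by rwa [mul_zero])
  have h2 : IntegrableOn (fun t => (α⁻¹) ^ j * ((α * t) ^ j * g (α * t))) (Ioi 0) :=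
    h.const_mul ((α⁻¹) ^ j)
  refine h2.congr_fun (fun t ht => ?_) measurableSet_Ioi
  have hne : α ≠ 0 := hα.ne'
  show α⁻¹ ^ j * ((α * t) ^ j * g (α * t)) = t ^ j * g (α * t)
  rw [mul_pow, inv_pow, ← mul_assoc, ← mul_assoc, inv_mul_cancel₀ (pow_ne_zero j hne), one_mul]

lemma subst_eq_aux (α : ℝ) (hα : 0 < α) (j : ℕ) (g : ℝ → ℝ) :
    ∫ t in Ioi (0:ℝ), t ^ j * g (α * t)
      = (α ^ (j + 1))⁻¹ * ∫ t in Ioi (0:ℝ), t ^ j * g t := by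
  have hne : α ≠ 0 := hα.ne'
  have h1 : (∫ t in Ioi (0:ℝ), t ^ j * g (α * t))
      = ∫ t in Ioi (0:ℝ), (α⁻¹) ^ j * ((fun x => x ^ j * g x) (α * t)) := by
    congr 1; funext t
    simp only [mul_pow]
    rw [inv_pow, ← mul_assoc, ← mul_assoc, inv_mul_cancel₀ (pow_ne_zero j hne), one_mul]
  rw [h1, MeasureTheory.integral_const_mul, integral_comp_mul_left_Ioi (fun x => x ^ j * g x) 0 hα,
    mul_zero]
  simp only [smul_eq_mul]
  rw [pow_succ]
  field_simp
  rw [one_div, inv_pow, mul_comm, ← mul_assoc, mul_inv_cancel₀ (pow_ne_zero j hne), one_mul]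

/-- Multiplying the nonlinear equation by `t^j` and integrating over `[0,∞)` gives
`(α^{j+1} - 2) μ_j(v) - j α^{j+1} μ_{j-1}(v) - μ_j(v²) = 0`. -/
theorem moment_identity_higher (α : ℝ) (hα : 0 < α) (j : ℕ) (hj : 1 ≤ j)
    (v : ℝ → ℝ)
    (hv : ContDiff ℝ 1 v)
    (heq : ∀ t : ℝ, 0 < t → deriv v t + v t = 2 * v (α * t) + (v (α * t)) ^ 2)
    (h0 : v 0 = 0)
    (hlim : Tendsto (fun t => t ^ j * v t) atTop (nhds 0))
    (hintj : IntegrableOn (fun t => t ^ j * v t) (Ioi 0))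
    (hintj1 : IntegrableOn (fun t => t ^ (j - 1) * v t) (Ioi 0))
    (hint2 : IntegrableOn (fun t => t ^ j * (v t) ^ 2) (Ioi 0))
    (hint' : IntegrableOn (fun t => t ^ j * deriv v t) (Ioi 0)) :
    (α ^ (j + 1) - 2) * (∫ t in Ioi (0 : ℝ), t ^ j * v t) -
      (j : ℝ) * α ^ (j + 1) * (∫ t in Ioi (0 : ℝ), t ^ (j - 1) * v t) -
      (∫ t in Ioi (0 : ℝ), t ^ j * (v t) ^ 2) = 0 := by
  have hvd : Differentiable ℝ v := hv.differentiable one_ne_zero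
  have hintd : IntegrableOn
      (fun t => (j : ℝ) * (t ^ (j - 1) * v t) + t ^ j * deriv v t) (Ioi 0) :=
    (hintj1.const_mul (j : ℝ)).add hint'
  -- integration by parts
  have hibp : (∫ t in Ioi (0:ℝ), ((j : ℝ) * (t ^ (j - 1) * v t) + t ^ j * deriv v t))
      = 0 - (0:ℝ) ^ j * v 0 := by
    refine integral_Ioi_of_hasDerivAt_of_tendsto
      ((continuous_pow j).mul hvd.continuous).continuousWithinAt (fun x hx => ?_) hintd hlim
    have h := (hasDerivAt_pow j x).mul (hvd x).hasDerivAt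
    simpa [mul_assoc] using h
  rw [h0, mul_zero, sub_zero] at hibp
  rw [integral_add (hintj1.const_mul (j : ℝ)) hint', integral_const_mul] at hibp
  -- derivative integral value
  have hder : (∫ t in Ioi (0:ℝ), t ^ j * deriv v t)
      = -((j : ℝ) * ∫ t in Ioi (0:ℝ), t ^ (j - 1) * v t) := by linarith
  -- integrate the functional equation
  have hI1 : IntegrableOn (fun t => t ^ j * v (α * t)) (Ioi 0) :=
    subst_int_aux α hα j v hintj
  have hI2 : IntegrableOn (fun t => t ^ j * (v (α * t)) ^ 2) (Ioi 0) :=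
    subst_int_aux α hα j (fun x => (v x) ^ 2) hint2
  have hkey : (∫ t in Ioi (0:ℝ), (t ^ j * deriv v t + t ^ j * v t))
      = ∫ t in Ioi (0:ℝ), (2 * (t ^ j * v (α * t)) + t ^ j * (v (α * t)) ^ 2) := by
    refine setIntegral_congr_fun measurableSet_Ioi (fun t ht => ?_)
    have h := heq t ht
    linear_combination (t : ℝ) ^ j * h
  rw [integral_add hint' hintj, integral_add ((hI1.const_mul 2)) hI2,
    integral_const_mul, subst_eq_aux α hα j v, subst_eq_aux α hα j (fun x => (v x) ^ 2),
    hder] at hkey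
  have hApos : (0:ℝ) < α ^ (j + 1) := pow_pos hα _
  field_simp at hkey
  nlinarith [hkey]
end

section
/- Let $a, b$ be nonzero real numbers and $\alpha > 1$. Then $1 + \sum_{k=1}^{\infty} \frac{(b/a)^k}{(1-\alpha)(1-\alpha^2)\cdots(1-\alpha^k)} = 0$ if and only if $b = a\alpha^n$ for some positive integer $n$. -/
open Finset

noncomputable def Pe (α : ℝ) (k : ℕ) : ℝ := ∏ i ∈ Finset.range k, (1 - α ^ (i + 1))

noncomputable def Se (α c : ℝ) : ℝ := ∑' k : ℕ, c ^ k / Pe α k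

lemma Pe_zero (α : ℝ) : Pe α 0 = 1 := by simp [Pe]

lemma Pe_succ (α : ℝ) (k : ℕ) : Pe α (k + 1) = Pe α k * (1 - α ^ (k + 1)) := by
  simp [Pe, Finset.prod_range_succ]

lemma one_lt_pow'' {α : ℝ} (hα : 1 < α) (i : ℕ) : 1 < α ^ (i + 1) :=
  one_lt_pow₀ hα (Nat.succ_ne_zero i)

lemma abs_factor {α : ℝ} (hα : 1 < α) (i : ℕ) : |1 - α ^ (i + 1)| = α ^ (i + 1) - 1 := by
  have := one_lt_pow'' hα i
  rw [abs_of_neg (by linarith)]; ring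

lemma Pe_ne_zero {α : ℝ} (hα : 1 < α) (k : ℕ) : Pe α k ≠ 0 := by
  induction k with
  | zero => simp [Pe_zero]
  | succ k ih => rw [Pe_succ]; exact mul_ne_zero ih (factor_ne hα k)

lemma abs_Pe_ge {α : ℝ} (hα : 1 < α) (k : ℕ) : (α - 1) ^ k ≤ |Pe α k| := by
  rw [Pe, Finset.abs_prod]
  calc (α - 1) ^ k = ∏ _i ∈ Finset.range k, (α - 1) := by
        rw [Finset.prod_const, Finset.card_range]
    _ ≤ ∏ i ∈ Finset.range k, |1 - α ^ (i + 1)| := by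
        apply Finset.prod_le_prod (fun i _ => by linarith)
        intro i _
        rw [abs_factor hα i]
        have : α ^ 1 ≤ α ^ (i + 1) := pow_le_pow_right₀ (le_of_lt (by linarith)) (by omega)
        simpa using by nlinarith [this]

lemma summable_f {α : ℝ} (hα : 1 < α) (c : ℝ) :
    Summable (fun k : ℕ => c ^ k / Pe α k) := by
  apply summable_of_ratio_norm_eventually_le (r := 1/2) (by norm_num)
  have h := (tendsto_pow_atTop_atTop_of_one_lt hα).eventually_ge_atTop (2 * |c| + 1)
  rw [Filter.eventually_atTop] at h
  obtain ⟨N, hN⟩ := h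
  rw [Filter.eventually_atTop]
  refine ⟨N, fun k hk => ?_⟩
  have hk1 : 2 * |c| + 1 ≤ α ^ (k + 1) := hN (k + 1) (by omega)
  have hPk := Pe_ne_zero hα k
  have hPkpos : 0 < |Pe α k| := abs_pos.mpr hPk
  have hfpos : 0 < α ^ (k + 1) - 1 := by linarith [one_lt_pow'' hα k]
  have : ‖c ^ (k + 1) / Pe α (k + 1)‖ = (|c| / (α ^ (k+1) - 1)) * ‖c ^ k / Pe α k‖ := by
    rw [Real.norm_eq_abs, Real.norm_eq_abs, abs_div, abs_div, Pe_succ, abs_mul,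
      abs_factor hα k, pow_succ, abs_mul]
    field_simp
  rw [this]
  have hle : |c| / (α ^ (k+1) - 1) ≤ 1/2 := by
    rw [div_le_div_iff₀ hfpos (by norm_num)]
    linarith
  have : (0:ℝ) ≤ ‖c ^ k / Pe α k‖ := norm_nonneg _
  nlinarith

set_option maxHeartbeats 1000000 in
lemma Se_func {α : ℝ} (hα : 1 < α) (c : ℝ) : Se α (c * α) = (1 - c) * Se α c := by
  have h1 := summable_f hα c
  have h2 := summable_f hα (c * α)
  have h1' : Summable (fun k : ℕ => c ^ (k+1) / Pe α (k+1)) :=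
    (summable_nat_add_iff 1).mpr h1
  have hc1 : Summable (fun k : ℕ => c * (c ^ k / Pe α k)) := h1.mul_left c
  have key : ∀ k : ℕ, (c * α) ^ (k+1) / Pe α (k+1)
      = c ^ (k+1) / Pe α (k+1) - c * (c ^ k / Pe α k) := by
    intro k
    have hPk := Pe_ne_zero hα k
    have hf := factor_ne hα k
    have hre : c * (c ^ k / Pe α k) = (c ^ k * c) / Pe α k := by ring
    rw [Pe_succ, mul_pow, pow_succ, hre]
    rw [div_sub_div _ _ (mul_ne_zero hPk hf) hPk, div_eq_div_iff
      (mul_ne_zero hPk hf) (mul_ne_zero (mul_ne_zero hPk hf) hPk)]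
    ring
  calc Se α (c * α) = 1 + ∑' k : ℕ, (c * α) ^ (k+1) / Pe α (k+1) := by
        rw [Se, Summable.tsum_eq_zero_add h2]; simp [Pe_zero]
    _ = 1 + ∑' k : ℕ, (c ^ (k+1) / Pe α (k+1) - c * (c ^ k / Pe α k)) := by
        congr 1; exact tsum_congr key
    _ = 1 + ((∑' k : ℕ, c ^ (k+1) / Pe α (k+1)) - ∑' k : ℕ, c * (c ^ k / Pe α k)) := by
        rw [Summable.tsum_sub h1' hc1]
    _ = (1 + ∑' k : ℕ, c ^ (k+1) / Pe α (k+1)) - c * ∑' k : ℕ, c ^ k / Pe α k := by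
        rw [tsum_mul_left]; ring
    _ = Se α c - c * Se α c := by
        rw [Se, Summable.tsum_eq_zero_add h1]; simp [Pe_zero]
    _ = (1 - c) * Se α c := by ring

lemma my_abs_tsum_le {f : ℕ → ℝ} (hf : Summable fun k => |f k|) :
    |∑' k, f k| ≤ ∑' k, |f k| := by
  have h2 : (fun k => ‖f k‖) = fun k => |f k| := funext fun k => Real.norm_eq_abs _
  calc |∑' k, f k| = ‖∑' k, f k‖ := (Real.norm_eq_abs _).symm
    _ ≤ ∑' k, ‖f k‖ := norm_tsum_le_tsum_norm (h2 ▸ hf)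
    _ = ∑' k, |f k| := by rw [h2]

set_option maxHeartbeats 1000000 in
lemma Se_ne_zero_small {α : ℝ} (hα : 1 < α) {x : ℝ} (hx : |x| ≤ (α - 1) / 4) :
    Se α x ≠ 0 := by
  have h1 := summable_f hα x
  have h1' : Summable (fun k : ℕ => x ^ (k+1) / Pe α (k+1)) :=
    (summable_nat_add_iff 1).mpr h1
  have hgeo : Summable (fun k : ℕ => (1/4 : ℝ) ^ (k+1)) :=
    (summable_nat_add_iff 1).mpr (summable_geometric_of_lt_one (by norm_num) (by norm_num))
  have hpt : ∀ k : ℕ, |x ^ (k+1) / Pe α (k+1)| ≤ (1/4 : ℝ) ^ (k+1) := by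
    intro k
    have hPpos : 0 < |Pe α (k+1)| := abs_pos.mpr (Pe_ne_zero hα (k+1))
    have hPge := abs_Pe_ge hα (k+1)
    have ha1 : (0:ℝ) < α - 1 := by linarith
    rw [abs_div, abs_pow]
    calc |x| ^ (k+1) / |Pe α (k+1)| ≤ ((α-1)/4) ^ (k+1) / (α-1) ^ (k+1) := by
          apply div_le_div₀ (by positivity) (pow_le_pow_left₀ (abs_nonneg x) hx _)
            (by positivity) hPge
      _ = (1/4 : ℝ) ^ (k+1) := by
          have hd : ((α-1)/4) / (α-1) = 1/4 := by
            field_simp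
          rw [← div_pow, hd]
  have habs : |Se α x - 1| ≤ 1/3 := by
    have hSe : Se α x - 1 = ∑' k : ℕ, x ^ (k+1) / Pe α (k+1) := by
      rw [Se, Summable.tsum_eq_zero_add h1]; simp [Pe_zero]
    rw [hSe]
    calc |∑' k : ℕ, x ^ (k+1) / Pe α (k+1)| ≤ ∑' k : ℕ, |x ^ (k+1) / Pe α (k+1)| :=
          my_abs_tsum_le h1'.abs
      _ ≤ ∑' k : ℕ, (1/4 : ℝ) ^ (k+1) := Summable.tsum_le_tsum hpt h1'.abs hgeo
      _ = (∑' k : ℕ, (1/4 : ℝ) ^ k) * (1/4) := by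
          rw [← tsum_mul_right]
          exact tsum_congr fun k => pow_succ _ _
      _ = 1/3 := by
          rw [tsum_geometric_of_lt_one (by norm_num) (by norm_num)]
          norm_num
  intro h0
  rw [h0] at habs
  norm_num at habs

lemma Se_eq_zero_iff {α : ℝ} (hα : 1 < α) (c : ℝ) :
    Se α c = 0 ↔ ∃ n : ℕ, 0 < n ∧ c = α ^ n := by
  have hα0 : (0:ℝ) < α := by linarith
  constructor
  · intro h0
    by_contra hn
    push_neg at hn
    have hzero : ∀ N : ℕ, Se α (c / α ^ N) = 0 := by
      intro N
      induction N with
      | zero => simpa using h0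
      | succ N ih =>
        have heq : c / α ^ N = (c / α ^ (N+1)) * α := by
          field_simp [pow_succ]
          ring
        have hfe := Se_func hα (c / α ^ (N+1))
        rw [← heq, ih] at hfe
        have hfac : (1 - c / α ^ (N+1)) ≠ 0 := by
          intro h
          apply hn (N+1) (Nat.succ_pos N)
          have : c / α ^ (N+1) = 1 := by linarith
          field_simp at this
          linarith
        exact ((mul_eq_zero.mp hfe.symm).resolve_left hfac)
    obtain ⟨N, hN⟩ := pow_unbounded_of_one_lt (4 * |c| / (α - 1)) hα
    refine Se_ne_zero_small hα ?_ (hzero N)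
    have ha1 : (0:ℝ) < α - 1 := by linarith
    have hpN : (0:ℝ) < α ^ N := by positivity
    rw [abs_div, abs_pow, abs_of_pos hα0]
    rw [div_le_div_iff₀ hpN (by norm_num)]
    rw [div_lt_iff₀ ha1] at hN
    nlinarith
  · rintro ⟨n, hn, rfl⟩
    obtain ⟨m, rfl⟩ : ∃ m, n = m + 1 := ⟨n - 1, by omega⟩
    clear hn
    induction m with
    | zero =>
      have := Se_func hα 1
      simpa using this
    | succ m ih =>
      have := Se_func hα (α ^ (m+1))
      rw [ih] at this
      rw [pow_succ]
      simpa using this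

/-- For nonzero reals `a, b` and `α > 1`,
`1 + ∑_{k≥1} (b/a)^k / ((1-α)⋯(1-α^k)) = 0` iff `b = a α^n` for some `n ≥ 1`. -/
theorem characteristic_values_general (a b : ℝ) (ha : a ≠ 0) (hb : b ≠ 0)
    (α : ℝ) (hα : 1 < α) :
    1 + ∑' k : ℕ,
      (b / a) ^ (k + 1) / ∏ i ∈ Finset.range (k + 1), (1 - α ^ (i + 1)) = 0 ↔
    ∃ n : ℕ, 0 < n ∧ b = a * α ^ n := by
  have h1 := summable_f hα (b / a)
  have hS : Se α (b / a) =
      1 + ∑' k : ℕ,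
        (b / a) ^ (k + 1) / ∏ i ∈ Finset.range (k + 1), (1 - α ^ (i + 1)) := by
    rw [Se, Summable.tsum_eq_zero_add h1]; simp [Pe_zero, Pe]
  rw [← hS, Se_eq_zero_iff hα]
  constructor
  · rintro ⟨n, hn, h⟩
    exact ⟨n, hn, by field_simp at h; linarith⟩
  · rintro ⟨n, hn, h⟩
    exact ⟨n, hn, by rw [h]; field_simp⟩
end

section
/- Suppose $\alpha > 0$, $n \geq 2$ is an integer with $\alpha^n = 2$, and $v_0 : [0,\infty) \to \mathbb{R}$ is continuously differentiable, satisfies $v_0'(t) + v_0(t) = 2 v_0(\alpha t)$ for $t > 0$ with $v_0(0) = 0$, and for all $0 \leq j \leq n-1$ the functions $t^j v_0$ and $t^j v_0'$ are integrable with $t^j v_0(t) \to 0$ as $t \to \infty$. Then $\int_0^\infty t^j v_0(t)\, dt = 0$ for all $0 \leq j \leq n-2$. -/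
open MeasureTheory Set Filter

/-- If `α^n = 2` with `n ≥ 2` and `v₀` is a suitably integrable solution of the
linear equation `v₀' + v₀ = 2 v₀(α·)` with `v₀(0) = 0`, then the moments
`∫₀^∞ t^j v₀(t) dt` vanish for `0 ≤ j ≤ n - 2`. -/
theorem lower_moments_vanish (α : ℝ) (hα : 0 < α) (n : ℕ) (hn : 2 ≤ n)
    (hαn : α ^ n = 2)
    (v₀ : ℝ → ℝ)
    (hv : ContDiff ℝ 1 v₀)
    (heq : ∀ t : ℝ, 0 < t → deriv v₀ t + v₀ t = 2 * v₀ (α * t))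
    (h0 : v₀ 0 = 0)
    (hint : ∀ j : ℕ, j ≤ n - 1 → IntegrableOn (fun t => t ^ j * v₀ t) (Ioi 0))
    (hint' : ∀ j : ℕ, j ≤ n - 1 → IntegrableOn (fun t => t ^ j * deriv v₀ t) (Ioi 0))
    (hlim : ∀ j : ℕ, j ≤ n - 1 → Tendsto (fun t => t ^ j * v₀ t) atTop (nhds 0)) :
    ∀ j : ℕ, j ≤ n - 2 → ∫ t in Ioi (0 : ℝ), t ^ j * v₀ t = 0 := by
  have hdiff : Differentiable ℝ v₀ := hv.differentiable one_ne_zero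
  have hα1 : 1 < α := by
    by_contra h
    push_neg at h
    have : α ^ n ≤ 1 := pow_le_one₀ hα.le h
    linarith
  -- α^(j+1) < 2 for j ≤ n-2
  have hlt : ∀ j : ℕ, j ≤ n - 2 → α ^ (j + 1) < 2 := by
    intro j hj
    have : j + 1 < n := by omega
    calc α ^ (j + 1) < α ^ n := pow_lt_pow_right₀ hα1 this
      _ = 2 := hαn
  -- the moment relation from the ODE and substitution
  have hrel : ∀ j : ℕ, j ≤ n - 1 →
      (∫ t in Ioi (0:ℝ), t ^ j * deriv v₀ t) + (∫ t in Ioi (0:ℝ), t ^ j * v₀ t)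
        = 2 / α ^ (j + 1) * ∫ t in Ioi (0:ℝ), t ^ j * v₀ t := by
    intro j hj
    have h1 : (∫ t in Ioi (0:ℝ), t ^ j * deriv v₀ t) + (∫ t in Ioi (0:ℝ), t ^ j * v₀ t)
        = ∫ t in Ioi (0:ℝ), (t ^ j * deriv v₀ t + t ^ j * v₀ t) :=
      (integral_add (hint' j hj) (hint j hj)).symm
    have h2 : ∫ t in Ioi (0:ℝ), (t ^ j * deriv v₀ t + t ^ j * v₀ t)
        = ∫ t in Ioi (0:ℝ), 2 * (t ^ j * v₀ (α * t)) := by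
      apply setIntegral_congr_fun measurableSet_Ioi
      intro t ht
      have := heq t ht
      simp only
      linear_combination t ^ j * this
    have h3 : ∫ t in Ioi (0:ℝ), (t ^ j * v₀ (α * t))
        = α⁻¹ * α⁻¹ ^ j * ∫ t in Ioi (0:ℝ), t ^ j * v₀ t := by
      have : ∀ t : ℝ, t ^ j * v₀ (α * t) = α⁻¹ ^ j * ((α * t) ^ j * v₀ (α * t)) := by
        intro t
        rw [mul_pow]
        field_simp
        rw [div_pow, one_pow, mul_assoc, one_div_mul_cancel (pow_ne_zero j hα.ne'), mul_one]
      simp_rw [this]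
      rw [integral_const_mul]
      have := integral_comp_mul_left_Ioi (fun x => x ^ j * v₀ x) 0 hα
      rw [mul_zero] at this
      rw [this]
      simp [smul_eq_mul]
      ring
    rw [h1, h2, integral_const_mul, h3, div_eq_mul_inv, ← inv_pow, pow_succ]
    ring
  -- integration by parts: for j+1 ≤ n-1
  have hIBP : ∀ j : ℕ, j + 1 ≤ n - 1 →
      (∫ t in Ioi (0:ℝ), t ^ (j + 1) * deriv v₀ t)
        = -((j : ℝ) + 1) * ∫ t in Ioi (0:ℝ), t ^ j * v₀ t := by
    intro j hj
    have hf' : IntegrableOn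
        (fun t => ((j : ℝ) + 1) * t ^ j * v₀ t + t ^ (j + 1) * deriv v₀ t) (Ioi 0) := by
      apply Integrable.add _ (hint' (j + 1) hj)
      have := (hint j (by omega)).const_mul ((j : ℝ) + 1)
      simpa [mul_assoc] using this
    have hFTC := integral_Ioi_of_hasDerivAt_of_tendsto (a := (0:ℝ))
      (f := fun t => t ^ (j + 1) * v₀ t)
      (f' := fun t => ((j : ℝ) + 1) * t ^ j * v₀ t + t ^ (j + 1) * deriv v₀ t)
      (m := 0)
      ((continuous_pow (j+1)).continuousWithinAt.mul hv.continuous.continuousWithinAt)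
      (fun x _ => by
        have h1 : HasDerivAt (fun t : ℝ => t ^ (j + 1)) (((j:ℝ) + 1) * x ^ j) x := by
          simpa using hasDerivAt_pow (j + 1) x
        have h2 : HasDerivAt v₀ (deriv v₀ x) x := (hdiff x).hasDerivAt
        exact (h1.mul h2).congr_deriv (by ring))
      hf' (hlim (j + 1) hj)
    simp only [h0, mul_zero, zero_pow, Nat.succ_ne_zero, ne_eq, sub_zero, zero_sub] at hFTC
    have hsplit : ∫ t in Ioi (0:ℝ),
        (((j : ℝ) + 1) * t ^ j * v₀ t + t ^ (j + 1) * deriv v₀ t)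
        = ((j:ℝ) + 1) * (∫ t in Ioi (0:ℝ), t ^ j * v₀ t)
          + ∫ t in Ioi (0:ℝ), t ^ (j + 1) * deriv v₀ t := by
      rw [integral_add _ (hint' (j + 1) hj)]
      · rw [← integral_const_mul]
        simp [mul_assoc]
      · have := (hint j (by omega)).const_mul ((j : ℝ) + 1)
        simpa [mul_assoc] using this
    rw [hsplit] at hFTC
    linarith
  -- base case j = 0
  have base : ∫ t in Ioi (0:ℝ), (t:ℝ) ^ 0 * v₀ t = 0 := by
    have hd0 : (∫ t in Ioi (0:ℝ), (t:ℝ) ^ 0 * deriv v₀ t) = 0 := by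
      have hFTC := integral_Ioi_of_hasDerivAt_of_tendsto (a := (0:ℝ))
        (f := v₀) (f' := deriv v₀) (m := 0)
        hv.continuous.continuousWithinAt
        (fun x _ => (hdiff x).hasDerivAt)
        (by simpa using hint' 0 (by omega))
        (by simpa using hlim 0 (by omega))
      simp only [h0, sub_zero] at hFTC
      simpa using hFTC
    have := hrel 0 (by omega)
    rw [hd0, zero_add] at this
    have hpos : (0:ℝ) < α ^ (0 + 1) := pow_pos hα _
    have hne : (1:ℝ) < 2 / α ^ (0 + 1) := (one_lt_div hpos).mpr (hlt 0 (by omega))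
    have h4 : (1 - 2 / α ^ (0 + 1)) * ∫ t in Ioi (0:ℝ), (t:ℝ) ^ 0 * v₀ t = 0 := by
      linear_combination this
    rcases mul_eq_zero.mp h4 with h5 | h5
    · linarith
    · exact h5
  -- induction
  intro j
  induction j with
  | zero => intro _; exact base
  | succ k ih =>
    intro hj
    have hk : k ≤ n - 2 := by omega
    have hμk : ∫ t in Ioi (0:ℝ), t ^ k * v₀ t = 0 := ih hk
    have h1 := hrel (k + 1) (by omega)
    have h2 := hIBP k (by omega)
    rw [h2, hμk, mul_zero, zero_add] at h1
    have hpos : (0:ℝ) < α ^ (k + 1 + 1) := pow_pos hα _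
    have hne : (1:ℝ) < 2 / α ^ (k + 1 + 1) := (one_lt_div hpos).mpr (hlt (k + 1) hj)
    have h4 : (1 - 2 / α ^ (k + 1 + 1)) * ∫ t in Ioi (0:ℝ), t ^ (k + 1) * v₀ t = 0 := by
      linear_combination h1
    rcases mul_eq_zero.mp h4 with h5 | h5
    · linarith
    · exact h5
end
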